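/- (Theorem 2, second part) For every η ∈ U and every x ∈ S⁺, the partial derivative of φ at η with respect to the coordinate η(x) exists and equals θ_η(x), i.e. ∂φ(η)/∂η(x) = Σ_{s ≤ x} μ(s,x) log p_η(s). -/

import Mathlib

local instance {S : Type*} [PartialOrder S] [DecidableEq S]
    [DecidableRel ((· ≤ ·) : S → S → Prop)] :
    DecidableRel ((· < ·) : S → S → Prop) :=
  fun a b => decidable_of_iff (a ≤ b ∧ a ≠ b) lt_iff_le_and_ne.symm

/-- The extension of `η : ℝ^{S⁺}` to `S` with `η(⊥) = 1`. -/
noncomputable def etaBar {S : Type*} [PartialOrder S] [OrderBot S] [DecidableEq S]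
    (η : {x : S // x ≠ ⊥} → ℝ) (s : S) : ℝ :=
  if h : s = ⊥ then 1 else η ⟨s, h⟩

/-- `p_η(x) = Σ_{s ≥ x} μ(x,s) η(s)`, where `η(⊥) = 1`. -/
noncomputable def pEta {S : Type*} [Fintype S] [PartialOrder S] [OrderBot S] [DecidableEq S]
    [DecidableRel ((· ≤ ·) : S → S → Prop)]
    (mu : S → S → ℤ) (η : {x : S // x ≠ ⊥} → ℝ) (x : S) : ℝ :=
  ∑ s ∈ Finset.univ.filter (fun s => x ≤ s), (mu x s : ℝ) * etaBar η s

/-- `φ(η) = Σ_{x∈S} p_η(x) log p_η(x)`. -/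
noncomputable def phi {S : Type*} [Fintype S] [PartialOrder S] [OrderBot S] [DecidableEq S]
    [DecidableRel ((· ≤ ·) : S → S → Prop)]
    (mu : S → S → ℤ) (η : {x : S // x ≠ ⊥} → ℝ) : ℝ :=
  ∑ x : S, pEta mu η x * Real.log (pEta mu η x)

/-- Partial derivative of a function `f : ℝ^{S⁺} → ℝ` with respect to the coordinate `x`. -/
noncomputable def pd {S : Type*} [Fintype S] [PartialOrder S] [OrderBot S] [DecidableEq S]
    (f : ({x : S // x ≠ ⊥} → ℝ) → ℝ) (x : {x : S // x ≠ ⊥})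
    (η : {x : S // x ≠ ⊥} → ℝ) : ℝ :=
  deriv (fun t => f (Function.update η x t)) (η x)

lemma mu_zeta_one {S : Type*} [Fintype S] [PartialOrder S]
    [DecidableEq S] [DecidableRel ((· ≤ ·) : S → S → Prop)]
    (mu : S → S → ℤ)
    (hmu_self : ∀ x : S, mu x x = 1)
    (hmu_lt : ∀ x y : S, x < y →
      mu x y = -∑ s ∈ Finset.univ.filter (fun s => x ≤ s ∧ s < y), mu x s)
    (hmu_nle : ∀ x y : S, ¬ x ≤ y → mu x y = 0) :
    (Matrix.of mu) * (Matrix.of (fun a b : S => if a ≤ b then (1:ℤ) else 0)) = 1 := by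
  ext a b
  simp only [Matrix.mul_apply, Matrix.of_apply, Matrix.one_apply, mul_ite, mul_one, mul_zero]
  rw [← Finset.sum_filter]
  have hkey : ∀ s ∈ Finset.univ.filter (fun s => s ≤ b), s ∉ Finset.univ.filter
      (fun s => a ≤ s ∧ s ≤ b) → mu a s = 0 := by
    intro s hs hns
    simp only [Finset.mem_filter, Finset.mem_univ, true_and] at hs hns
    exact hmu_nle a s (fun h => hns ⟨h, hs⟩)
  rw [← Finset.sum_subset (by intro s hs; simp only [Finset.mem_filter, Finset.mem_univ, true_and] at hs ⊢; exact hs.2) hkey]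
  by_cases hab : a = b
  · subst hab
    rw [Finset.sum_eq_single a]
    · simp [hmu_self, if_pos rfl]
    · intro s hs hne
      simp only [Finset.mem_filter, Finset.mem_univ, true_and] at hs
      exact absurd (le_antisymm hs.2 hs.1) hne
    · intro h
      exact absurd (Finset.mem_filter.2 ⟨Finset.mem_univ a, le_refl a, le_refl a⟩) h
  · rw [if_neg hab]
    by_cases hle : a ≤ b
    · have hlt : a < b := lt_of_le_of_ne hle hab
      have hsplit : Finset.univ.filter (fun s => a ≤ s ∧ s ≤ b)
          = insert b (Finset.univ.filter (fun s => a ≤ s ∧ s < b)) := by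
        ext s
        simp only [Finset.mem_filter, Finset.mem_univ, true_and, Finset.mem_insert]
        constructor
        · rintro ⟨h1, h2⟩
          rcases eq_or_lt_of_le h2 with h | h
          · exact Or.inl h
          · exact Or.inr ⟨h1, h⟩
        · rintro (rfl | ⟨h1, h2⟩)
          · exact ⟨hle, le_refl _⟩
          · exact ⟨h1, h2.le⟩
      rw [hsplit, Finset.sum_insert (by simp), hmu_lt a b hlt]
      ring
    · apply Finset.sum_eq_zero
      intro s hs
      simp only [Finset.mem_filter, Finset.mem_univ, true_and] at hs
      exact absurd (hs.1.trans hs.2) hle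

lemma sum_mu_col {S : Type*} [Fintype S] [PartialOrder S] [OrderBot S]
    [DecidableEq S] [DecidableRel ((· ≤ ·) : S → S → Prop)]
    (mu : S → S → ℤ)
    (hmu_self : ∀ x : S, mu x x = 1)
    (hmu_lt : ∀ x y : S, x < y →
      mu x y = -∑ s ∈ Finset.univ.filter (fun s => x ≤ s ∧ s < y), mu x s)
    (hmu_nle : ∀ x y : S, ¬ x ≤ y → mu x y = 0)
    (x : S) (hx : x ≠ ⊥) : ∑ s : S, mu s x = 0 := by
  have h := mu_zeta_one mu hmu_self hmu_lt hmu_nle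
  rw [mul_eq_one_comm] at h
  have h2 := congrFun (congrFun h ⊥) x
  simp only [Matrix.mul_apply, Matrix.of_apply, Matrix.one_apply, bot_le, if_true, one_mul] at h2
  rw [h2, if_neg (Ne.symm hx)]


/-- (Theorem 2, second part) For every `η ∈ U` (i.e. `p_η > 0` everywhere) and `x ∈ S⁺`,
`∂φ(η)/∂η(x)` exists and equals `θ_η(x) = Σ_{s ≤ x} μ(s,x) log p_η(s)`. -/
theorem hasDerivAt_phi {S : Type*} [Fintype S] [PartialOrder S] [OrderBot S]
    [DecidableEq S] [DecidableRel ((· ≤ ·) : S → S → Prop)]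
    (mu : S → S → ℤ)
    (hmu_self : ∀ x : S, mu x x = 1)
    (hmu_lt : ∀ x y : S, x < y →
      mu x y = -∑ s ∈ Finset.univ.filter (fun s => x ≤ s ∧ s < y), mu x s)
    (hmu_nle : ∀ x y : S, ¬ x ≤ y → mu x y = 0)
    (η : {x : S // x ≠ ⊥} → ℝ) (hU : ∀ s : S, 0 < pEta mu η s) (x : {x : S // x ≠ ⊥}) :
    HasDerivAt (fun t => phi mu (Function.update η x t))
      (∑ s ∈ Finset.univ.filter (fun s => s ≤ (x : S)), (mu s (x : S) : ℝ)
        * Real.log (pEta mu η s))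
      (η x) := by
  -- etaBar after update
  have hbar : ∀ (t : ℝ) (u : S), etaBar (Function.update η x t) u
      = etaBar η u + (if u = (x : S) then t - η x else 0) := by
    intro t u
    unfold etaBar
    by_cases hu : u = ⊥
    · subst hu
      rw [dif_pos rfl, dif_pos rfl, if_neg (fun h => x.2 h.symm), add_zero]
    · rw [dif_neg hu, dif_neg hu]
      by_cases hux : u = (x : S)
      · have : (⟨u, hu⟩ : {x : S // x ≠ ⊥}) = x := Subtype.ext hux
        rw [this, Function.update_self, if_pos hux]
        ring
      · have : (⟨u, hu⟩ : {x : S // x ≠ ⊥}) ≠ x := fun h => hux (congrArg Subtype.val h)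
        rw [Function.update_of_ne this, if_neg hux, add_zero]
  -- pEta after update: affine in t
  have hpe : ∀ (t : ℝ) (s : S), pEta mu (Function.update η x t) s
      = pEta mu η s + (mu s (x : S) : ℝ) * (t - η x) := by
    intro t s
    unfold pEta
    simp only [hbar t, mul_add, Finset.sum_add_distrib, mul_ite, mul_zero]
    congr 1
    rw [Finset.sum_ite_eq' (Finset.univ.filter (fun u => s ≤ u)) (x : S)
      (fun u => (mu s u : ℝ) * (t - η x))]
    by_cases hsx : s ≤ (x : S)
    · rw [if_pos (by simp [hsx])]
    · rw [if_neg (by simp [hsx]), hmu_nle s (x : S) hsx]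
      simp
  -- derivative of each summand
  have hterm : ∀ s : S, HasDerivAt
      (fun t => (pEta mu η s + (mu s (x : S) : ℝ) * (t - η x))
        * Real.log (pEta mu η s + (mu s (x : S) : ℝ) * (t - η x)))
      ((mu s (x : S) : ℝ) * (Real.log (pEta mu η s) + 1)) (η x) := by
    intro s
    set p := pEta mu η s with hp
    set m := ((mu s (x : S) : ℝ)) with hm
    have h1 : HasDerivAt (fun t : ℝ => p + m * (t - η x)) m (η x) := by
      simpa using (((hasDerivAt_id (η x)).sub_const (η x)).const_mul m).const_add p
    have hval : p + m * (η x - η x) = p := by ring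
    have hlog : HasDerivAt Real.log (1 / p) p := by
      simpa [one_div] using Real.hasDerivAt_log (hU s).ne'
    have hcomp : HasDerivAt (fun t => Real.log (p + m * (t - η x))) ((1 / p) * m) (η x) := by
      rw [← hval] at hlog
      have := hlog.comp (η x) h1
      rw [hval] at this
      exact this
    have := h1.mul hcomp
    rw [hval] at this
    have hne : p ≠ 0 := (hU s).ne'
    have e : m * (Real.log p + 1) = m * Real.log p + p * (1 / p * m) := by
      rw [one_div, ← mul_assoc, mul_inv_cancel₀ hne, one_mul]; ring
    rw [e]
    exact this
  have hsum := HasDerivAt.sum (fun s (_ : s ∈ (Finset.univ : Finset S)) => hterm s)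
  have hfun : (fun t => phi mu (Function.update η x t))
      = fun t => ∑ s : S, (pEta mu η s + (mu s (x : S) : ℝ) * (t - η x))
        * Real.log (pEta mu η s + (mu s (x : S) : ℝ) * (t - η x)) := by
    funext t
    unfold phi
    exact Finset.sum_congr rfl (fun s _ => by rw [hpe t s])
  rw [hfun]
  convert hsum using 1
  case e'_4 => rfl
  case e'_5 => rfl
  case e'_8 => ext t; rw [Finset.sum_apply]
  -- derivative value identity
  have hz : ∑ s : S, ((mu s (x : S) : ℝ)) = 0 := by
    have := sum_mu_col mu hmu_self hmu_lt hmu_nle (x : S) x.2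
    exact_mod_cast congrArg (fun n : ℤ => (n : ℝ)) this
  have hrestrict : ∑ s ∈ Finset.univ.filter (fun s => s ≤ (x : S)),
      (mu s (x : S) : ℝ) * Real.log (pEta mu η s)
      = ∑ s : S, (mu s (x : S) : ℝ) * Real.log (pEta mu η s) := by
    apply Finset.sum_subset (Finset.filter_subset _ _)
    intro s _ hns
    simp only [Finset.mem_filter, Finset.mem_univ, true_and] at hns
    rw [hmu_nle s (x : S) hns]
    simp
  rw [hrestrict]
  calc ∑ s : S, (mu s (x : S) : ℝ) * Real.log (pEta mu η s)
      = ∑ s : S, ((mu s (x : S) : ℝ) * Real.log (pEta mu η s) + (mu s (x : S) : ℝ)) := by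
        rw [Finset.sum_add_distrib, hz, add_zero]
    _ = ∑ s : S, (mu s (x : S) : ℝ) * (Real.log (pEta mu η s) + 1) := by
        exact Finset.sum_congr rfl (fun s _ => by ring)
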